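/- Let n ≥ 2, l ≥ 0, λ > 0, and set M_±(z) = M((l±λ)/2, n/2+l, z). For R > 0 define G_R = -M_+(-R²/2)/M_-(-R²/2) and u(r) = r^l ( M_+(-r²/2) + G_R M_-(-r²/2) ). Then the radial bi-drift-Laplacian operator A_r = d²/dr² + ((n-1)/r + r) d/dr - l(l+n-2)/r² satisfies A_r² u = λ² u on (0,R), and u(R) = 0. -/

import Mathlib

open MeasureTheory Real Set

noncomputable section

/-- The Kummer confluent hypergeometric function `M(a,b,z)`. -/
def kummerM (a b z : ℝ) : ℝ :=
  ∑' k : ℕ, ((ascPochhammer ℝ k).eval a / ((ascPochhammer ℝ k).eval b * (Nat.factorial k))) * z ^ k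

/-- The radial drift operator `A_r` in anti-Gauss space with angular momentum `l`. -/
def radialOp (n l : ℕ) (f : ℝ → ℝ) (r : ℝ) : ℝ :=
  deriv (deriv f) r + (((n : ℝ) - 1) / r + r) * deriv f r
    - ((l : ℝ) * ((l : ℝ) + (n : ℝ) - 2)) / r ^ 2 * f r

namespace S13

def pch (a : ℝ) (k : ℕ) : ℝ := (ascPochhammer ℝ k).eval a

lemma pch_zero (a : ℝ) : pch a 0 = 1 := by simp [pch]

lemma pch_succ (a : ℝ) (k : ℕ) : pch a (k+1) = pch a k * (a + k) := by
  simp [pch, ascPochhammer_succ_right]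

lemma pch_pos {b : ℝ} (hb : 0 < b) (k : ℕ) : 0 < pch b k := by
  induction k with
  | zero => simp [pch_zero]
  | succ k ih => rw [pch_succ]; positivity

lemma pch_ge_factorial {b : ℝ} (hb : 1 ≤ b) (k : ℕ) : (k.factorial : ℝ) ≤ pch b k := by
  induction k with
  | zero => simp [pch_zero]
  | succ k ih =>
    rw [pch_succ, Nat.factorial_succ, Nat.cast_mul]
    have h1 : (0:ℝ) < k.factorial := by positivity
    have : ((k:ℝ)+1) ≤ b + k := by linarith
    calc ((k+1 : ℕ) : ℝ) * k.factorial = (k.factorial : ℝ) * ((k:ℝ)+1) := by push_cast; ring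
    _ ≤ pch b k * (b + k) := by
        apply mul_le_mul ih this (by positivity) (le_trans (by positivity) ih)

lemma abs_pch_le (a : ℝ) (k : ℕ) : |pch a k| ≤ (|a|+1)^k * k.factorial := by
  induction k with
  | zero => simp [pch_zero]
  | succ k ih =>
    rw [pch_succ, abs_mul, pow_succ, Nat.factorial_succ]
    have h2 : |a + (k:ℝ)| ≤ (|a|+1) * ((k:ℝ)+1) := by
      calc |a + (k:ℝ)| ≤ |a| + k := by simpa using abs_add_le a (k:ℝ)
      _ ≤ (|a|+1) * ((k:ℝ)+1) := by nlinarith [abs_nonneg a, Nat.cast_nonneg (α := ℝ) k]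
    calc |pch a k| * |a + (k:ℝ)| ≤ ((|a|+1)^k * k.factorial) * ((|a|+1) * ((k:ℝ)+1)) := by
          apply mul_le_mul ih h2 (abs_nonneg _) (by positivity)
    _ = (|a|+1)^k * (|a|+1) * (((k+1:ℕ)) * (k.factorial:ℝ)) := by push_cast; ring
    _ ≤ _ := by push_cast; ring_nf; rfl


def S (c : ℕ → ℝ) (z : ℝ) : ℝ := ∑' k, c k * z ^ k
def sh (c : ℕ → ℝ) (k : ℕ) : ℝ := ((k:ℝ)+1) * c (k+1)

def Bnd (c : ℕ → ℝ) : Prop := ∃ B C : ℝ, 0 ≤ B ∧ 0 ≤ C ∧ ∀ k, |c k| ≤ B * C^k / k.factorial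

lemma bnd_sh {c : ℕ → ℝ} (h : Bnd c) : Bnd (sh c) := by
  obtain ⟨B, C, hB, hC, hb⟩ := h
  refine ⟨B*C, C, by positivity, hC, fun k => ?_⟩
  have h1 : |sh c k| = ((k:ℝ)+1) * |c (k+1)| := by
    rw [S13.sh, abs_mul, abs_of_nonneg (by positivity)]
  rw [h1]
  calc ((k:ℝ)+1) * |c (k+1)| ≤ ((k:ℝ)+1) * (B * C^(k+1) / (k+1).factorial) := by
        apply mul_le_mul_of_nonneg_left (hb (k+1)) (by positivity)
  _ = B * C * C ^ k / k.factorial := by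
      rw [Nat.factorial_succ]; push_cast
      have h2 : ((k:ℝ)+1) ≠ 0 := by positivity
      have h3 : (k.factorial : ℝ) ≠ 0 := by positivity
      field_simp; ring

lemma bnd_summable_abs {c : ℕ → ℝ} (h : Bnd c) (r : ℝ) (hr : 0 ≤ r) :
    Summable (fun k => |c k| * r ^ k) := by
  obtain ⟨B, C, hB, hC, hb⟩ := h
  have hs : Summable (fun k => B * (C*r)^k / k.factorial) := by
    simpa [mul_div_assoc] using (Real.summable_pow_div_factorial (C*r)).mul_left B
  refine Summable.of_nonneg_of_le (fun k => by positivity) (fun k => ?_) hs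
  calc |c k| * r^k ≤ (B * C^k / k.factorial) * r^k := by
        apply mul_le_mul_of_nonneg_right (hb k) (by positivity)
  _ = B * (C*r)^k / k.factorial := by rw [mul_pow]; ring

lemma bnd_summable {c : ℕ → ℝ} (h : Bnd c) (x : ℝ) :
    Summable (fun k => c k * x ^ k) := by
  apply Summable.of_norm
  have := bnd_summable_abs h |x| (abs_nonneg x)
  simpa [abs_mul, abs_pow] using this

lemma summable_deriv_term {c : ℕ → ℝ} (h : Bnd c) (r : ℝ) (hr : 0 ≤ r) :
    Summable (fun k : ℕ => (k:ℝ) * |c k| * r ^ (k-1)) := by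
  rw [← summable_nat_add_iff 1]
  have := bnd_summable_abs (bnd_sh h) r hr
  apply this.congr
  intro k
  have h1 : |sh c k| = ((k:ℝ)+1) * |c (k+1)| := by
    rw [S13.sh, abs_mul, abs_of_nonneg (by positivity)]
  simp only [h1, Nat.add_sub_cancel]
  push_cast; ring

lemma tsum_deriv_eq {c : ℕ → ℝ} (h : Bnd c) (x : ℝ) :
    ∑' k : ℕ, (k:ℝ) * c k * x ^ (k-1) = S (sh c) x := by
  have hs : Summable (fun k : ℕ => (k:ℝ) * c k * x ^ (k-1)) := by
    apply Summable.of_norm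
    apply (summable_deriv_term h |x| (abs_nonneg x)).congr
    intro k
    simp [abs_mul, abs_pow, abs_of_nonneg, mul_assoc]
  rw [hs.tsum_eq_zero_add]
  simp only [Nat.cast_zero, zero_mul, zero_add, S, S13.sh]
  apply tsum_congr; intro k
  simp only [Nat.add_sub_cancel]
  push_cast; ring

lemma bnd_hasDerivAt {c : ℕ → ℝ} (h : Bnd c) (x : ℝ) :
    HasDerivAt (S c) (S (sh c) x) x := by
  set A := |x| + 1 with hA
  have hA0 : (0:ℝ) < A := by positivity
  have hxt : x ∈ Ioo (-A) A := ⟨by nlinarith [neg_abs_le x], by nlinarith [le_abs_self x]⟩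
  have hg : ∀ (k:ℕ) (y:ℝ), y ∈ Ioo (-A) A →
      HasDerivAt (fun z : ℝ => c k * z ^ k) ((k:ℝ) * c k * y ^ (k-1)) y := by
    intro k y _
    have := (hasDerivAt_pow k y).const_mul (c k)
    exact this.congr_deriv (by ring)
  have hgb : ∀ (k:ℕ) (y:ℝ), y ∈ Ioo (-A) A →
      ‖(k:ℝ) * c k * y ^ (k-1)‖ ≤ (k:ℝ) * |c k| * A ^ (k-1) := by
    intro k y hy
    have hyA : |y| ≤ A := by rw [abs_le]; exact ⟨hy.1.le, hy.2.le⟩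
    simp only [Real.norm_eq_abs, abs_mul, abs_pow, Nat.abs_cast]
    have hp := pow_le_pow_left₀ (abs_nonneg y) hyA (k-1)
    have h1 : (0:ℝ) ≤ (k:ℝ) * |c k| := by positivity
    exact mul_le_mul_of_nonneg_left hp h1
  have key : HasDerivAt (fun z : ℝ => ∑' k : ℕ, c k * z ^ k) (∑' k : ℕ, (k:ℝ) * c k * x ^ (k-1)) x :=
    hasDerivAt_tsum_of_isPreconnected (summable_deriv_term h A hA0.le) isOpen_Ioo isPreconnected_Ioo hg hgb hxt (bnd_summable h x) hxt
  rw [tsum_deriv_eq h x] at key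
  exact key

end S13

-- Kummer coefficients
namespace S13

def cK (a b : ℝ) (k : ℕ) : ℝ := pch a k / (pch b k * k.factorial)

lemma bnd_cK (a : ℝ) {b : ℝ} (hb : 1 ≤ b) : Bnd (cK a b) := by
  refine ⟨1, |a|+1, zero_le_one, by positivity, fun k => ?_⟩
  have hbp : (0:ℝ) < pch b k := pch_pos (by linarith) k
  have hf : (0:ℝ) < k.factorial := by positivity
  have h1 : |cK a b k| = |pch a k| / (pch b k * k.factorial) := by
    rw [cK, abs_div, abs_of_pos (show (0:ℝ) < pch b k * (k.factorial:ℝ) from by positivity)]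
  rw [h1, one_mul]
  rw [div_le_div_iff₀ (by positivity) hf]
  calc |pch a k| * (k.factorial:ℝ) ≤ ((|a|+1)^k * k.factorial) * k.factorial := by
        apply mul_le_mul_of_nonneg_right (abs_pch_le a k) hf.le
  _ ≤ (|a|+1)^k * (pch b k * k.factorial) := by
        have h2 := mul_le_mul_of_nonneg_left (pch_ge_factorial hb k)
          (show (0:ℝ) ≤ (|a|+1)^k * k.factorial by positivity)
        nlinarith [h2]

lemma cK_rec {b : ℝ} (hb : 1 ≤ b) (a : ℝ) (k : ℕ) :
    ((k:ℝ)+b) * sh (cK a b) k = ((k:ℝ)+a) * cK a b k := by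
  have hbp : (0:ℝ) < pch b k := pch_pos (by linarith) k
  have hf : (0:ℝ) < (k.factorial : ℝ) := by positivity
  have hk1 : (0:ℝ) < (k:ℝ)+1 := by positivity
  rw [sh, cK, cK, pch_succ, pch_succ, Nat.factorial_succ]
  push_cast
  field_simp
  ring

lemma summable_k_mul {d : ℕ → ℝ} (hd : Bnd d) (z : ℝ) :
    Summable (fun k : ℕ => (k:ℝ) * d k * z^k) := by
  rw [← summable_nat_add_iff 1]
  apply ((bnd_summable (bnd_sh hd) z).mul_right z).congr
  intro k
  rw [S13.sh]
  push_cast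
  ring

lemma mul_shift {d : ℕ → ℝ} (hd : Bnd d) (z : ℝ) :
    z * S (sh d) z = ∑' k : ℕ, (k:ℝ) * d k * z^k := by
  rw [(summable_k_mul hd z).tsum_eq_zero_add]
  simp only [Nat.cast_zero, zero_mul, zero_add]
  have : ∀ k : ℕ, ((k+1:ℕ):ℝ) * d (k+1) * z^(k+1) = (sh d k * z^k) * z := by
    intro k; rw [S13.sh]; push_cast; ring
  rw [tsum_congr this, tsum_mul_right]
  rw [S]; ring

lemma kummer_ode {b : ℝ} (hb : 1 ≤ b) (a z : ℝ) :
    z * S (sh (sh (cK a b))) z + (b - z) * S (sh (cK a b)) z = a * S (cK a b) z := by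
  set c := cK a b with hc
  have hbnd : Bnd c := bnd_cK a hb
  have e1 : z * S (sh (sh c)) z = ∑' k : ℕ, (k:ℝ) * sh c k * z^k := mul_shift (bnd_sh hbnd) z
  have e2 : z * S (sh c) z = ∑' k : ℕ, (k:ℝ) * c k * z^k := mul_shift hbnd z
  have e3 : b * S (sh c) z = ∑' k : ℕ, b * (sh c k * z^k) := by
    rw [S, ← tsum_mul_left]
  have e4 : a * S c z = ∑' k : ℕ, a * (c k * z^k) := by
    rw [S, ← tsum_mul_left]
  have expand : (b - z) * S (sh c) z = b * S (sh c) z - z * S (sh c) z := by ring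
  rw [expand, e1, e2, e3, e4]
  have s1 : Summable (fun k : ℕ => (k:ℝ) * sh c k * z^k) := summable_k_mul (bnd_sh hbnd) z
  have s2 : Summable (fun k : ℕ => b * (sh c k * z^k)) := (bnd_summable (bnd_sh hbnd) z).mul_left b
  have s3 : Summable (fun k : ℕ => (k:ℝ) * c k * z^k) := summable_k_mul hbnd z
  rw [← s2.tsum_sub s3, ← s1.tsum_add (s2.sub s3)]
  apply tsum_congr
  intro k
  have hrec := cK_rec hb a k
  rw [← hc] at hrec
  linear_combination (z^k) * hrec

end S13

namespace S13

lemma inner_hasDeriv (r : ℝ) : HasDerivAt (fun r : ℝ => -r^2/2) (-r) r := by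
  have h := ((hasDerivAt_pow 2 r).div_const 2).neg
  have e : (fun r : ℝ => -r^2/2) = -fun x => x^2/2 := by funext x; simp only [Pi.neg_apply]; ring
  rw [e]
  exact h.congr_deriv (by push_cast; ring)

lemma comp_hasDeriv {c : ℕ → ℝ} (h : Bnd c) (r : ℝ) :
    HasDerivAt (fun r : ℝ => S c (-r^2/2)) (S (sh c) (-r^2/2) * (-r)) r := by
  have := (bnd_hasDerivAt h (-r^2/2)).comp r (inner_hasDeriv r)
  exact this

def V (l : ℕ) (c : ℕ → ℝ) (r : ℝ) : ℝ := r^l * S c (-r^2/2)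

def V1 (l : ℕ) (c : ℕ → ℝ) (r : ℝ) : ℝ :=
  (l:ℝ) * r^(l-1) * S c (-r^2/2) + r^l * (S (sh c) (-r^2/2) * (-r))

def V2 (l : ℕ) (c : ℕ → ℝ) (r : ℝ) : ℝ :=
  ((l:ℝ) * (((l-1:ℕ)):ℝ) * r^(l-1-1)) * S c (-r^2/2)
    + (l:ℝ) * r^(l-1) * (S (sh c) (-r^2/2) * (-r))
    + ((l:ℝ) * r^(l-1) * (S (sh c) (-r^2/2) * (-r))
      + r^l * (S (sh (sh c)) (-r^2/2) * (-r) * (-r) + S (sh c) (-r^2/2) * (-1)))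

lemma V_hasDeriv {c : ℕ → ℝ} (h : Bnd c) (l : ℕ) (r : ℝ) :
    HasDerivAt (V l c) (V1 l c r) r := by
  have := (hasDerivAt_pow l r).mul (comp_hasDeriv h r)
  exact this

lemma V1_hasDeriv {c : ℕ → ℝ} (h : Bnd c) (l : ℕ) (r : ℝ) :
    HasDerivAt (V1 l c) (V2 l c r) r := by
  have h1 : HasDerivAt (fun r : ℝ => (l:ℝ) * r^(l-1) * S c (-r^2/2))
      ((l:ℝ) * (((l-1:ℕ)):ℝ) * r^(l-1-1) * S c (-r^2/2)
        + (l:ℝ) * r^(l-1) * (S (sh c) (-r^2/2) * (-r))) r := by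
    have hp : HasDerivAt (fun r : ℝ => (l:ℝ) * r^(l-1)) ((l:ℝ) * (((l-1:ℕ)):ℝ) * r^(l-1-1)) r := by
      have := (hasDerivAt_pow (l-1) r).const_mul (l:ℝ)
      exact this.congr_deriv (by ring)
    have := hp.mul (comp_hasDeriv h r)
    exact this
  have h2 : HasDerivAt (fun r : ℝ => r^l * (S (sh c) (-r^2/2) * (-r)))
      ((l:ℝ) * r^(l-1) * (S (sh c) (-r^2/2) * (-r))
        + r^l * (S (sh (sh c)) (-r^2/2) * (-r) * (-r) + S (sh c) (-r^2/2) * (-1))) r := by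
    have hg : HasDerivAt (fun r : ℝ => S (sh c) (-r^2/2) * (-r))
        (S (sh (sh c)) (-r^2/2) * (-r) * (-r) + S (sh c) (-r^2/2) * (-1)) r := by
      have hneg : HasDerivAt (fun x : ℝ => -x) (-1) r := by
        exact (hasDerivAt_id r).neg
      exact (comp_hasDeriv (bnd_sh h) r).mul hneg
    have := (hasDerivAt_pow l r).mul hg
    exact this
  have := h1.add h2
  exact this

lemma deriv_V {c : ℕ → ℝ} (h : Bnd c) (l : ℕ) : deriv (V l c) = V1 l c :=
  funext fun r => (V_hasDeriv h l r).deriv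

lemma deriv_V1 {c : ℕ → ℝ} (h : Bnd c) (l : ℕ) : deriv (V1 l c) = V2 l c :=
  funext fun r => (V1_hasDeriv h l r).deriv

lemma hl1 (l : ℕ) {r : ℝ} (hr : r ≠ 0) : (l:ℝ) * r^(l-1) = (l:ℝ) * r^l / r := by
  cases l with
  | zero => simp
  | succ m =>
    simp only [Nat.add_sub_cancel]
    rw [pow_succ, mul_div_assoc, mul_div_cancel_right₀ _ hr]

lemma hl2 (l : ℕ) {r : ℝ} (hr : r ≠ 0) :
    (l:ℝ) * (((l-1:ℕ)):ℝ) * r^(l-1-1) = (l:ℝ) * ((l:ℝ)-1) * r^l / r^2 := by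
  match l with
  | 0 => simp
  | 1 => simp
  | (m+2) =>
    rw [show m+2-1-1 = m from rfl, show m+2-1 = m+1 from rfl]
    have h2 : r^(m+2) = r^m * r^2 := by ring
    rw [h2]
    have hr2 : r^2 ≠ 0 := pow_ne_zero 2 hr
    push_cast
    field_simp
    ring

end S13

namespace S13

lemma eigen {n l : ℕ} {a b : ℝ} (hb : 1 ≤ b) (hb2 : b = (n:ℝ)/2 + l) {r : ℝ} (hr : r ≠ 0) :
    radialOp n l (V l (cK a b)) r = ((l:ℝ) - 2*a) * V l (cK a b) r := by
  subst hb2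
  have hbnd : Bnd (cK a ((n:ℝ)/2 + l)) := bnd_cK a hb
  rw [radialOp, deriv_V hbnd, deriv_V1 hbnd, V2, V1, V]
  rw [hl1 l hr, hl2 l hr]
  have key := kummer_ode hb a (-r^2/2)
  set F := S (cK a ((n:ℝ)/2 + l)) (-r^2/2) with hF
  set F1 := S (sh (cK a ((n:ℝ)/2 + l))) (-r^2/2) with hF1
  set F2 := S (sh (sh (cK a ((n:ℝ)/2 + l)))) (-r^2/2) with hF2
  have hr2 : r^2 ≠ 0 := pow_ne_zero 2 hr
  field_simp
  linear_combination (-2*r^2) * key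

end S13

namespace S13

lemma pch_succ_left (a : ℝ) (k : ℕ) : pch a (k+1) = a * pch (a+1) k := by
  simp [pch, ascPochhammer_succ_left, Polynomial.eval_comp]

lemma pch_add (x : ℝ) (j m : ℕ) : pch x (j+m) = pch x j * pch (x+j) m := by
  have := ascPochhammer_mul ℝ j m
  have h2 := congrArg (Polynomial.eval x) this
  simp only [Polynomial.eval_mul, Polynomial.eval_comp, Polynomial.eval_add,
    Polynomial.eval_X, Polynomial.eval_natCast] at h2
  rw [pch, pch, pch, ← h2]

def L (a b : ℝ) (k : ℕ) : ℝ :=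
  ∑ j ∈ Finset.range (k+1), (-1:ℝ)^j * (k.choose j) * pch a j * pch (b+j) (k-j)

lemma chu : ∀ (k : ℕ) (a b : ℝ), L a b k = pch (b-a) k := by
  intro k
  induction k with
  | zero => intro a b; simp [L, pch_zero]
  | succ k ih =>
    intro a b
    have hsplit : L a b (k+1) = pch b (k+1) + ∑ i ∈ Finset.range (k+1),
        (-1:ℝ)^(i+1) * (((k+1).choose (i+1) : ℕ)) * pch a (i+1) * pch (b+((i+1:ℕ):ℝ)) (k-i) := by
      rw [L, Finset.sum_range_succ']
      simp only [Nat.succ_sub_succ, pow_zero, Nat.choose_zero_right, Nat.cast_one, pch_zero,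
        Nat.cast_zero, add_zero, Nat.sub_zero, one_mul, mul_one]
      exact add_comm _ _
    have hPascal : ∀ i : ℕ, (((k+1).choose (i+1) : ℕ) : ℝ)
        = ((k.choose i : ℕ) : ℝ) + ((k.choose (i+1) : ℕ) : ℝ) := by
      intro i; rw [Nat.choose_succ_succ]; push_cast; ring
    -- split the sum
    have hsum : ∑ i ∈ Finset.range (k+1),
        (-1:ℝ)^(i+1) * (((k+1).choose (i+1) : ℕ)) * pch a (i+1) * pch (b+((i+1:ℕ):ℝ)) (k-i)
        = (∑ i ∈ Finset.range (k+1),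
            (-1:ℝ)^(i+1) * ((k.choose (i+1) : ℕ)) * pch a (i+1) * pch (b+((i+1:ℕ):ℝ)) (k-i))
          + (∑ i ∈ Finset.range (k+1),
            (-1:ℝ)^(i+1) * ((k.choose i : ℕ)) * pch a (i+1) * pch (b+((i+1:ℕ):ℝ)) (k-i)) := by
      rw [← Finset.sum_add_distrib]
      apply Finset.sum_congr rfl
      intro i _
      rw [hPascal i]; ring
    -- second sum is -a * L (a+1) (b+1) k
    have hS2 : ∑ i ∈ Finset.range (k+1),
        (-1:ℝ)^(i+1) * ((k.choose i : ℕ)) * pch a (i+1) * pch (b+((i+1:ℕ):ℝ)) (k-i)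
        = -a * L (a+1) (b+1) k := by
      rw [L, Finset.mul_sum]
      apply Finset.sum_congr rfl
      intro i _
      rw [pch_succ_left a i]
      have e : b + ((i+1:ℕ):ℝ) = (b+1) + (i:ℝ) := by push_cast; ring
      rw [e, pow_succ]
      ring
    -- first sum plus pch b (k+1) equals (b+k) * L a b k
    have hS1 : pch b (k+1) + (∑ i ∈ Finset.range (k+1),
        (-1:ℝ)^(i+1) * ((k.choose (i+1) : ℕ)) * pch a (i+1) * pch (b+((i+1:ℕ):ℝ)) (k-i))
        = (b+(k:ℝ)) * L a b k := by
      have expand : (b+(k:ℝ)) * L a b k = ∑ j ∈ Finset.range (k+1),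
          (-1:ℝ)^j * ((k.choose j : ℕ)) * pch a j * pch (b+(j:ℝ)) ((k-j)+1) := by
        rw [L, Finset.mul_sum]
        apply Finset.sum_congr rfl
        intro j hj
        have hjk : j ≤ k := Nat.lt_succ_iff.mp (Finset.mem_range.mp hj)
        rw [pch_succ]
        have e : b + (j:ℝ) + ((k-j:ℕ):ℝ) = b + (k:ℝ) := by
          rw [Nat.cast_sub hjk]; ring
        rw [e]; ring
      calc pch b (k+1) + (∑ i ∈ Finset.range (k+1),
            (-1:ℝ)^(i+1) * ((k.choose (i+1) : ℕ)) * pch a (i+1) * pch (b+((i+1:ℕ):ℝ)) (k-i))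
          = pch b (k+1) + ((∑ i ∈ Finset.range k,
            (-1:ℝ)^(i+1) * ((k.choose (i+1) : ℕ)) * pch a (i+1) * pch (b+((i+1:ℕ):ℝ)) (k-i))
            + (-1:ℝ)^(k+1) * ((k.choose (k+1) : ℕ)) * pch a (k+1) * pch (b+((k+1:ℕ):ℝ)) (k-k)) := by
            rw [Finset.sum_range_succ
              (fun i => (-1:ℝ)^(i+1) * ((k.choose (i+1) : ℕ)) * pch a (i+1) * pch (b+((i+1:ℕ):ℝ)) (k-i)) k]
        _ = pch b (k+1) + ∑ i ∈ Finset.range k,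
            (-1:ℝ)^(i+1) * ((k.choose (i+1) : ℕ)) * pch a (i+1) * pch (b+((i+1:ℕ):ℝ)) (k-i) := by
            rw [Nat.choose_succ_self]; push_cast; ring
        _ = ((∑ i ∈ Finset.range k,
            (-1:ℝ)^(i+1) * ((k.choose (i+1) : ℕ)) * pch a (i+1) * pch (b+((i+1:ℕ):ℝ)) ((k-(i+1))+1))
            + (-1:ℝ)^0 * ((k.choose 0 : ℕ)) * pch a 0 * pch (b+((0:ℕ):ℝ)) ((k-0)+1)) := by
            have h0 : (-1:ℝ)^0 * ((k.choose 0 : ℕ):ℝ) * pch a 0 * pch (b+((0:ℕ):ℝ)) ((k-0)+1)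
                = pch b (k+1) := by simp [pch_zero]
            rw [h0, add_comm]
            congr 1
            apply Finset.sum_congr rfl
            intro i hi
            have hik : i < k := Finset.mem_range.mp hi
            have e : k - (i+1) + 1 = k - i := by omega
            rw [e]
        _ = ∑ j ∈ Finset.range (k+1),
            (-1:ℝ)^j * ((k.choose j : ℕ)) * pch a j * pch (b+(j:ℝ)) ((k-j)+1) := by
            rw [Finset.sum_range_succ'
              (fun j => (-1:ℝ)^j * ((k.choose j : ℕ)) * pch a j * pch (b+(j:ℝ)) ((k-j)+1)) k]
        _ = (b+(k:ℝ)) * L a b k := expand.symm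
    rw [hsplit, hsum, hS2, ← add_assoc, hS1, ih, ih, pch_succ]
    have e : b + 1 - (a + 1) = b - a := by ring
    rw [e]
    ring

end S13

namespace S13

lemma summable_norm_cS {c : ℕ → ℝ} (h : Bnd c) (z : ℝ) :
    Summable (fun k => ‖c k * z^k‖) := by
  apply (bnd_summable_abs h |z| (abs_nonneg z)).congr
  intro k; rw [Real.norm_eq_abs, abs_mul, abs_pow]

lemma summable_norm_exp (z : ℝ) : Summable (fun k : ℕ => ‖(-z)^k / (k.factorial:ℝ)‖) := by
  apply (Real.summable_pow_div_factorial |z|).congr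
  intro k
  rw [Real.norm_eq_abs, abs_div, abs_pow, abs_neg, Nat.abs_cast]

lemma conv_coeff {b : ℝ} (hb : 1 ≤ b) (a : ℝ) (n : ℕ) :
    ∑ k ∈ Finset.range (n+1), ((-1:ℝ)^k / k.factorial) * cK a b (n-k)
      = (-1:ℝ)^n * cK (b-a) b n := by
  have hrefl := Finset.sum_range_reflect
    (fun k => ((-1:ℝ)^k / k.factorial) * cK a b (n-k)) (n+1)
  rw [← hrefl]
  have term : ∀ j ∈ Finset.range (n+1),
      ((-1:ℝ)^(n+1-1-j) / (n+1-1-j).factorial) * cK a b (n-(n+1-1-j))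
      = (-1:ℝ)^n * (((-1:ℝ)^j * ((n.choose j : ℕ):ℝ) * pch a j * pch (b+(j:ℝ)) (n-j))
          / (pch b n * n.factorial)) := by
    intro j hj
    have hjn : j ≤ n := Nat.lt_succ_iff.mp (Finset.mem_range.mp hj)
    have e1 : n+1-1-j = n-j := by omega
    have e2 : n-(n-j) = j := by omega
    rw [e1, e2]
    have hsign : (-1:ℝ)^(n-j) * (-1:ℝ)^j = (-1:ℝ)^n := by
      rw [← pow_add, Nat.sub_add_cancel hjn]
    have hsign2 : (-1:ℝ)^(n-j) = (-1:ℝ)^n * (-1:ℝ)^j := by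
      have hj2 : ((-1:ℝ)^j) * ((-1:ℝ)^j) = 1 := by
        rw [← pow_add, ← two_mul, pow_mul]; norm_num
      calc (-1:ℝ)^(n-j) = (-1:ℝ)^(n-j) * (((-1:ℝ)^j) * ((-1:ℝ)^j)) := by rw [hj2]; ring
      _ = ((-1:ℝ)^(n-j) * (-1:ℝ)^j) * (-1:ℝ)^j := by ring
      _ = (-1:ℝ)^n * (-1:ℝ)^j := by rw [hsign]
    have hpchn : pch b n = pch b j * pch (b+(j:ℝ)) (n-j) := by
      have := pch_add b j (n-j)
      rwa [Nat.add_sub_cancel' hjn] at this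
    have hfac : (n.factorial : ℝ) = (n.choose j : ℝ) * j.factorial * (n-j).factorial := by
      rw [← Nat.choose_mul_factorial_mul_factorial hjn]; push_cast; ring
    have hp1 : (0:ℝ) < pch b j := pch_pos (by linarith) j
    have hp2 : (0:ℝ) < pch (b+(j:ℝ)) (n-j) := by
      apply pch_pos
      have : (0:ℝ) ≤ (j:ℝ) := Nat.cast_nonneg j
      linarith
    have hc : (0:ℝ) < (n.choose j : ℝ) := by
      have := Nat.choose_pos hjn
      exact_mod_cast this
    have hfj : (0:ℝ) < (j.factorial : ℝ) := by positivity
    have hfnj : (0:ℝ) < ((n-j).factorial : ℝ) := by positivity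
    rw [cK, hsign2, hpchn, hfac]
    field_simp
  rw [Finset.sum_congr rfl term, ← Finset.mul_sum, ← Finset.sum_div]
  have hchu : ∑ j ∈ Finset.range (n+1),
      (-1:ℝ)^j * ((n.choose j : ℕ):ℝ) * pch a j * pch (b+(j:ℝ)) (n-j) = pch (b-a) n := chu n a b
  rw [hchu, cK]

lemma kummer_transform {b : ℝ} (hb : 1 ≤ b) (a z : ℝ) :
    Real.exp (-z) * S (cK a b) z = S (cK (b-a) b) (-z) := by
  have hexp : Real.exp (-z) = ∑' k : ℕ, (-z)^k / (k.factorial:ℝ) := by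
    rw [Real.exp_eq_exp_ℝ, NormedSpace.exp_eq_tsum_div]
  rw [hexp, S, S]
  rw [tsum_mul_tsum_eq_tsum_sum_range_of_summable_norm (summable_norm_exp z)
    (summable_norm_cS (bnd_cK a hb) z)]
  apply tsum_congr
  intro n
  have step : ∀ k ∈ Finset.range (n+1), ((-z)^k / (k.factorial:ℝ)) * (cK a b (n-k) * z^(n-k))
      = (((-1:ℝ)^k / k.factorial) * cK a b (n-k)) * z^n := by
    intro k hk
    have hkn : k ≤ n := Nat.lt_succ_iff.mp (Finset.mem_range.mp hk)
    have hzz : z^k * z^(n-k) = z^n := by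
      rw [← pow_add, Nat.add_sub_cancel' hkn]
    rw [neg_pow]
    calc ((-1:ℝ)^k * z^k / (k.factorial:ℝ)) * (cK a b (n-k) * z^(n-k))
        = (((-1:ℝ)^k / k.factorial) * cK a b (n-k)) * (z^k * z^(n-k)) := by ring
    _ = (((-1:ℝ)^k / k.factorial) * cK a b (n-k)) * z^n := by rw [hzz]
  rw [Finset.sum_congr rfl step, ← Finset.sum_mul, conv_coeff hb a n, neg_pow z n]
  ring

lemma pch_nonneg {a : ℝ} (ha : 0 ≤ a) (k : ℕ) : 0 ≤ pch a k := by
  induction k with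
  | zero => simp [pch_zero]
  | succ k ih =>
    rw [pch_succ]
    have : (0:ℝ) ≤ (k:ℝ) := Nat.cast_nonneg k
    nlinarith

lemma S_pos {a b z : ℝ} (ha : 0 ≤ a) (hb : 1 ≤ b) (hz : 0 ≤ z) : 0 < S (cK a b) z := by
  rw [S]
  apply (bnd_summable (bnd_cK a hb) z).tsum_pos _ 0
  · simp [cK, pch_zero]
  · intro k
    have h1 : (0:ℝ) ≤ pch a k := pch_nonneg ha k
    have h2 : (0:ℝ) < pch b k := pch_pos (by linarith) k
    have h3 : (0:ℝ) < (k.factorial:ℝ) := by positivity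
    have : (0:ℝ) ≤ cK a b k := by rw [cK]; positivity
    exact mul_nonneg this (pow_nonneg hz k)

lemma S_ne_zero {a b z : ℝ} (hb : 1 ≤ b) (hba : 0 ≤ b - a) (hz : z ≤ 0) :
    S (cK a b) z ≠ 0 := by
  intro h0
  have ht := kummer_transform hb a z
  rw [h0, mul_zero] at ht
  have hpos : 0 < S (cK (b-a) b) (-z) := S_pos hba hb (by linarith)
  rw [← ht] at hpos
  exact lt_irrefl 0 hpos

end S13

namespace S13

lemma radial_lin {c d : ℕ → ℝ} (hc : Bnd c) (hd : Bnd d) (α β : ℝ) (n l : ℕ) (s : ℝ) :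
    radialOp n l (fun r => α * V l c r + β * V l d r) s
      = α * radialOp n l (V l c) s + β * radialOp n l (V l d) s := by
  have d1 : deriv (fun r => α * V l c r + β * V l d r) = fun r => α * V1 l c r + β * V1 l d r :=
    funext fun r => (((V_hasDeriv hc l r).const_mul α).add ((V_hasDeriv hd l r).const_mul β)).deriv
  have d2 : deriv (fun r => α * V1 l c r + β * V1 l d r) s = α * V2 l c s + β * V2 l d s :=
    (((V1_hasDeriv hc l s).const_mul α).add ((V1_hasDeriv hd l s).const_mul β)).deriv
  rw [radialOp, radialOp, radialOp, d1, d2, deriv_V hc, deriv_V hd, deriv_V1 hc, deriv_V1 hd]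
  simp only []
  ring

end S13


open S13 in
/-- `u(r) = r^l (M₊(-r²/2) + G_R M₋(-r²/2))` satisfies `A_r² u = λ² u`
on `(0,R)` and `u(R) = 0`. -/
theorem stmt13 (n l : ℕ) (hn : 2 ≤ n) (lam R : ℝ) (hlam : 0 < lam) (hR : 0 < R)
    (Mp Mm : ℝ → ℝ)
    (hMp : Mp = fun z => kummerM (((l : ℝ) + lam) / 2) ((n : ℝ) / 2 + (l : ℝ)) z)
    (hMm : Mm = fun z => kummerM (((l : ℝ) - lam) / 2) ((n : ℝ) / 2 + (l : ℝ)) z)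
    (GR : ℝ) (hGR : GR = -Mp (-R ^ 2 / 2) / Mm (-R ^ 2 / 2))
    (u : ℝ → ℝ)
    (hu : u = fun r => r ^ l * (Mp (-r ^ 2 / 2) + GR * Mm (-r ^ 2 / 2))) :
    (∀ r ∈ Ioo (0 : ℝ) R, radialOp n l (radialOp n l u) r = lam ^ 2 * u r)
    ∧ u R = 0 := by
  have hkM : kummerM = fun a b z => S (cK a b) z := rfl
  set b : ℝ := (n:ℝ)/2 + (l:ℝ) with hbdef
  set ap : ℝ := ((l:ℝ) + lam)/2 with hap
  set am : ℝ := ((l:ℝ) - lam)/2 with ham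
  have hn2 : (2:ℝ) ≤ (n:ℝ) := by exact_mod_cast hn
  have hl0 : (0:ℝ) ≤ (l:ℝ) := Nat.cast_nonneg l
  have hb : 1 ≤ b := by rw [hbdef]; linarith
  have hbp : Bnd (cK ap b) := bnd_cK ap hb
  have hbm : Bnd (cK am b) := bnd_cK am hb
  have hMp' : Mp = fun z => S (cK ap b) z := by rw [hMp, hkM]
  have hMm' : Mm = fun z => S (cK am b) z := by rw [hMm, hkM]
  have hu' : u = fun r => 1 * V l (cK ap b) r + GR * V l (cK am b) r := by
    rw [hu, hMp', hMm']
    funext r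
    simp only [V]
    ring
  -- Part 2 : u R = 0
  have hMmne : S (cK am b) (-R^2/2) ≠ 0 := by
    apply S_ne_zero hb
    · rw [ham, hbdef]; linarith
    · nlinarith [sq_nonneg R]
  have part2 : u R = 0 := by
    rw [hu, hMp', hMm', hGR, hMp', hMm']
    simp only []
    field_simp
    rw [div_self (by rwa [neg_div] at hMmne)]
    ring
  -- Part 1
  have heigp : ∀ s : ℝ, s ≠ 0 → radialOp n l (V l (cK ap b)) s = -lam * V l (cK ap b) s := by
    intro s hs
    have := eigen (n := n) (l := l) (a := ap) hb rfl hs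
    rw [this]
    have e : (l:ℝ) - 2*ap = -lam := by rw [hap]; ring
    rw [e]
  have heigm : ∀ s : ℝ, s ≠ 0 → radialOp n l (V l (cK am b)) s = lam * V l (cK am b) s := by
    intro s hs
    have := eigen (n := n) (l := l) (a := am) hb rfl hs
    rw [this]
    have e : (l:ℝ) - 2*am = lam := by rw [ham]; ring
    rw [e]
  have hueq : ∀ s : ℝ, s ≠ 0 →
      radialOp n l u s = (-lam) * V l (cK ap b) s + (lam*GR) * V l (cK am b) s := by
    intro s hs
    rw [hu', radial_lin hbp hbm 1 GR n l s, heigp s hs, heigm s hs]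
    ring
  refine ⟨?_, part2⟩
  intro r hr
  have hr0 : 0 < r := hr.1
  set g : ℝ → ℝ := fun s => (-lam) * V l (cK ap b) s + (lam*GR) * V l (cK am b) s with hg
  have hev : radialOp n l u =ᶠ[nhds r] g := by
    apply Filter.eventuallyEq_of_mem (isOpen_Ioi.mem_nhds hr0)
    intro s hs
    exact hueq s (ne_of_gt hs)
  have e0 : radialOp n l u r = g r := hueq r (ne_of_gt hr0)
  have e1 : deriv (radialOp n l u) r = deriv g r := hev.deriv_eq
  have e2 : deriv (deriv (radialOp n l u)) r = deriv (deriv g) r :=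
    (hev.deriv).deriv_eq
  have unfold1 : radialOp n l (radialOp n l u) r
      = deriv (deriv (radialOp n l u)) r + (((n:ℝ)-1)/r + r) * deriv (radialOp n l u) r
        - ((l:ℝ)*((l:ℝ)+(n:ℝ)-2))/r^2 * (radialOp n l u) r := rfl
  have unfold2 : radialOp n l g r
      = deriv (deriv g) r + (((n:ℝ)-1)/r + r) * deriv g r
        - ((l:ℝ)*((l:ℝ)+(n:ℝ)-2))/r^2 * g r := rfl
  rw [unfold1, e0, e1, e2, ← unfold2]
  rw [hg, radial_lin hbp hbm (-lam) (lam*GR) n l r, heigp r (ne_of_gt hr0), heigm r (ne_of_gt hr0)]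
  rw [hu']
  simp only []
  ring
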